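/- Let r ≥ 4 and n ≥ r−1 be integers, and let s be an integer with 1 ≤ s ≤ n−1. Then t_{r−1}(n−s)·C(n,2) ≥ C(n−s,2)·t_{r−1}(n). -/

import Mathlib

open Finset SimpleGraph

/-- `t_t(n)`: the number of edges of the Turán graph `T_t(n)`. -/
def turanE (t n : ℕ) : ℕ := (SimpleGraph.turanGraph n t).edgeFinset.card

/-- count of `w < n` with `w % t = j` -/
def resCnt (n t j : ℕ) : ℕ := ((Finset.range n).filter (fun w => w % t = j)).card

lemma resCnt_le (n t j : ℕ) : resCnt n t j ≤ n := by
  calc resCnt n t j ≤ (Finset.range n).card := Finset.card_filter_le _ _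
  _ = n := Finset.card_range n

lemma resCnt_succ (n t j : ℕ) :
    resCnt (n + 1) t j = resCnt n t j + if n % t = j then 1 else 0 := by
  unfold resCnt
  rw [Finset.range_add_one, Finset.filter_insert]
  split <;> simp [Finset.card_insert_of_notMem]

lemma dvd_aux (t n j : ℕ) (hj : j < t) : t ∣ (n + t - j) ↔ n % t = j := by
  have h := Nat.div_add_mod n t
  have hmt : n % t < t := Nat.mod_lt _ (by omega)
  have h2 : n + t - j = t * (n / t) + (n % t + t - j) := by omega
  rw [h2, Nat.dvd_add_right (dvd_mul_right t (n / t))]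
  constructor
  · rintro ⟨c, hc⟩
    have hc2 : c < 2 := by
      by_contra h2'
      push_neg at h2'
      have := Nat.mul_le_mul_left t h2'
      omega
    interval_cases c <;> omega
  · intro h3
    exact ⟨1, by omega⟩

lemma resCnt_formula (t : ℕ) (ht : 0 < t) (j : ℕ) (hj : j < t) :
    ∀ n, resCnt n t j = (n + t - 1 - j) / t := by
  intro n
  induction n with
  | zero =>
    have h0 : resCnt 0 t j = 0 := by simp [resCnt]
    rw [h0, Nat.div_eq_of_lt (by omega)]
  | succ n ih =>
    rw [resCnt_succ, ih]
    have h1 : n + 1 + t - 1 - j = (n + t - 1 - j) + 1 := by omega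
    have h2 : (n + t - 1 - j) + 1 = n + t - j := by omega
    rw [h1, Nat.succ_div]
    simp only [h2, dvd_aux t n j hj]

lemma resCnt_le_max (t : ℕ) (ht : 0 < t) (k j : ℕ) (hj : j < t) :
    resCnt (k + 1) t j ≤ resCnt k t (k % t) + 1 := by
  have hk : k % t < t := Nat.mod_lt _ ht
  rw [resCnt_formula t ht j hj, resCnt_formula t ht _ hk]
  have h1 : k + 1 + t - 1 - j = k + (t - j) := by omega
  have h2 : k + t - 1 - (k % t) = t * (k / t) + (t - 1) := by
    have := Nat.div_add_mod k t; omega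
  rw [h1, h2, Nat.mul_add_div ht, Nat.div_eq_of_lt (show t - 1 < t by omega)]
  calc (k + (t - j)) / t ≤ (k + t) / t := Nat.div_le_div_right (by omega)
  _ = k / t + 1 := by rw [Nat.add_div_right _ ht]
  _ = k / t + 0 + 1 := by ring

lemma resCnt_fin (n t j : ℕ) :
    (Finset.univ.filter fun w : Fin n => (w : ℕ) % t = j).card = resCnt n t j := by
  unfold resCnt
  rw [← Nat.Iio_eq_range, ← Fin.map_valEmbedding_univ, Finset.filter_map, Finset.card_map]
  rfl

lemma degree_turan (n t : ℕ) (v : Fin n) :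
    (turanGraph n t).degree v + resCnt n t ((v : ℕ) % t) = n := by
  classical
  have h1 : (turanGraph n t).degree v
      = (Finset.univ.filter fun w : Fin n => ¬ ((v : ℕ) % t = (w : ℕ) % t)).card := by
    rw [SimpleGraph.degree, SimpleGraph.neighborFinset_eq_filter]
    congr 1
  have h2 : resCnt n t ((v : ℕ) % t)
      = (Finset.univ.filter fun w : Fin n => ((v : ℕ) % t = (w : ℕ) % t)).card := by
    rw [← resCnt_fin n t]
    apply Finset.card_nbij id (by intro a ha; simp at ha ⊢; omega) (by simp [Set.InjOn])
      (by simp +contextual [eq_comm, Set.SurjOn, Set.subset_def])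
  rw [h1, h2, add_comm, Finset.card_filter_add_card_filter_not]
  simp

lemma degree_turan_eq (n t : ℕ) (v : Fin n) :
    (turanGraph n t).degree v = n - resCnt n t ((v : ℕ) % t) := by
  have := degree_turan n t v
  omega

lemma two_turanE (t n : ℕ) :
    2 * turanE t n = ∑ v : Fin n, (turanGraph n t).degree v :=
  (SimpleGraph.sum_degrees_eq_twice_card_edges _).symm

lemma sum_ite_resCnt (k t : ℕ) :
    ∑ v : Fin k, (if k % t = (v : ℕ) % t then 0 else 1) = k - resCnt k t (k % t) := by
  classical
  have h1 : ∑ v : Fin k, (if k % t = (v : ℕ) % t then 0 else 1)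
      = (Finset.univ.filter fun v : Fin k => ¬ (k % t = (v : ℕ) % t)).card := by
    rw [Finset.card_filter]
    apply Finset.sum_congr rfl
    intro v _
    split_ifs <;> simp_all
  have h2 : (Finset.univ.filter fun v : Fin k => (k % t = (v : ℕ) % t)).card
      = resCnt k t (k % t) := by
    rw [← resCnt_fin k t]
    apply Finset.card_nbij id (by intro a ha; simp at ha ⊢; omega) (by simp [Set.InjOn])
      (by simp +contextual [eq_comm, Set.SurjOn, Set.subset_def])
  have h3 := Finset.card_filter_add_card_filter_not
    (s := (Finset.univ : Finset (Fin k))) (fun v : Fin k => (k % t = (v : ℕ) % t))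
  simp only [Finset.card_univ, Fintype.card_fin] at h3
  omega

lemma turanE_succ (t k : ℕ) :
    turanE t (k + 1) = turanE t k + (k - resCnt k t (k % t)) := by
  have key : 2 * turanE t (k + 1) = 2 * turanE t k + 2 * (k - resCnt k t (k % t)) := by
    rw [two_turanE, two_turanE, Fin.sum_univ_castSucc]
    have hdeg : ∀ v : Fin k, (turanGraph (k+1) t).degree v.castSucc
        = (turanGraph k t).degree v + (if k % t = (v : ℕ) % t then 0 else 1) := by
      intro v
      have e1 := degree_turan (k+1) t v.castSucc
      have e2 := degree_turan k t v
      have e3 := resCnt_succ k t ((v : ℕ) % t)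
      simp only [Fin.coe_castSucc] at e1
      have hle := resCnt_le k t ((v : ℕ) % t)
      split_ifs with h
      · rw [if_pos h] at e3; omega
      · rw [if_neg h] at e3; omega
    have hlast : (turanGraph (k+1) t).degree (Fin.last k)
        = k - resCnt k t (k % t) := by
      have e1 := degree_turan (k+1) t (Fin.last k)
      have e3 := resCnt_succ k t (k % t)
      simp only [Fin.val_last] at e1
      have hle := resCnt_le k t (k % t)
      rw [if_pos rfl] at e3
      omega
    rw [hlast, Finset.sum_congr rfl (fun v _ => hdeg v), Finset.sum_add_distrib,
      sum_ite_resCnt]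
    ring
  omega

lemma turanE_min_deg (t k : ℕ) (ht : 0 < t) :
    (k + 1) * (k - resCnt k t (k % t)) ≤ 2 * turanE t (k + 1) := by
  rw [two_turanE]
  have := Finset.card_nsmul_le_sum (Finset.univ : Finset (Fin (k+1)))
    (fun v => (turanGraph (k+1) t).degree v) (k - resCnt k t (k % t)) ?bound
  · simpa [Finset.card_univ, smul_eq_mul] using this
  case bound =>
    intro v _
    have e1 := degree_turan (k+1) t v
    have hmax := resCnt_le_max t ht k ((v : ℕ) % t) (Nat.mod_lt _ ht)
    omega

lemma two_mul_choose_two (n : ℕ) : 2 * n.choose 2 = n * (n - 1) := by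
  rw [Nat.choose_two_right, Nat.mul_div_cancel']
  rcases n with _ | m
  · simp
  · simpa [Nat.mul_comm] using (Nat.even_mul_succ_self m).two_dvd

lemma turanE_step (t m : ℕ) (ht : 0 < t) :
    (m - 1).choose 2 * turanE t m ≤ turanE t (m - 1) * m.choose 2 := by
  rcases m with _ | k
  · simp
  · rcases Nat.lt_or_ge k 2 with hk | hk
    · interval_cases k <;> simp
    · simp only [Nat.add_sub_cancel]
      set d := k - resCnt k t (k % t) with hd
      have he := turanE_succ t k
      have hmin := turanE_min_deg t k ht
      -- (k-1)*d ≤ 2 * turanE t k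
      have hkey : (k - 1) * d ≤ 2 * turanE t k := by
        have h1 : (k + 1) * d = (k - 1) * d + 2 * d := by
          have : k + 1 = (k - 1) + 2 := by omega
          rw [this, add_mul]
        rw [he] at hmin
        linarith
      refine Nat.le_of_mul_le_mul_left ?_ (by norm_num : 0 < 2)
      calc 2 * (k.choose 2 * turanE t (k+1))
          = (2 * k.choose 2) * turanE t (k+1) := by ring
        _ = k * (k - 1) * (turanE t k + d) := by rw [two_mul_choose_two, he]
        _ = k * ((k - 1) * turanE t k + (k - 1) * d) := by ring
        _ ≤ k * ((k - 1) * turanE t k + 2 * turanE t k) := by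
            exact Nat.mul_le_mul_left k (Nat.add_le_add_left hkey _)
        _ = (k + 1) * k * turanE t k := by
            have : k - 1 + 2 = k + 1 := by omega
            rw [← add_mul, this]; ring
        _ = (2 * (k+1).choose 2) * turanE t k := by
            rw [two_mul_choose_two]; simp
        _ = 2 * (turanE t k * (k+1).choose 2) := by ring

lemma turanE_ratio_gen (t n : ℕ) (ht : 0 < t) :
    ∀ s, (n - s).choose 2 * turanE t n ≤ turanE t (n - s) * n.choose 2 := by
  intro s
  induction s with
  | zero => simpa [Nat.sub_zero] using (mul_comm (n.choose 2) (turanE t n)).le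
  | succ s ih =>
    set m := n - s with hm
    have hms : n - (s + 1) = m - 1 := by omega
    rw [hms]
    have hstep := turanE_step t m ht
    rcases Nat.eq_zero_or_pos (m.choose 2 * turanE t m) with h0 | hpos
    · rcases Nat.mul_eq_zero.mp h0 with h1 | h2
      · have hm2 : m < 2 := Nat.choose_eq_zero_iff.mp h1
        rw [Nat.choose_eq_zero_iff.mpr (show m - 1 < 2 by omega), zero_mul]
        exact Nat.zero_le _
      · rw [h2, zero_mul] at ih
        rcases Nat.eq_zero_or_pos (m.choose 2) with hc | hc
        · have hm2 : m < 2 := Nat.choose_eq_zero_iff.mp hc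
          rw [Nat.choose_eq_zero_iff.mpr (show m - 1 < 2 by omega), zero_mul]
          exact Nat.zero_le _
        · have hEn : turanE t n = 0 := by
            have := Nat.le_zero.mp ih
            exact (Nat.mul_eq_zero.mp this).resolve_left (by omega)
          rw [hEn, mul_zero]
          exact Nat.zero_le _
    · have hmul := Nat.mul_le_mul hstep ih
      have hre : (m - 1).choose 2 * turanE t m * (m.choose 2 * turanE t n)
          = (m.choose 2 * turanE t m) * ((m - 1).choose 2 * turanE t n) := by ring
      have hre2 : turanE t (m - 1) * m.choose 2 * (turanE t m * n.choose 2)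
          = (m.choose 2 * turanE t m) * (turanE t (m - 1) * n.choose 2) := by ring
      rw [hre, hre2] at hmul
      exact Nat.le_of_mul_le_mul_left hmul hpos

/-- For `r ≥ 4`, `n ≥ r−1` and `1 ≤ s ≤ n−1`,
`t_{r−1}(n−s)·C(n,2) ≥ C(n−s,2)·t_{r−1}(n)`. -/
theorem turanE_ratio (r n s : ℕ) (hr : 4 ≤ r) (hn : r - 1 ≤ n)
    (hs1 : 1 ≤ s) (hs2 : s ≤ n - 1) :
    (n - s).choose 2 * turanE (r - 1) n ≤ turanE (r - 1) (n - s) * n.choose 2 := by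
  exact turanE_ratio_gen (r - 1) n (by omega) s
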